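/- Let 𝒢 be a strongly connected directed graph on N nodes with Laplacian L, let r = (r₁,…,r_N) be the positive vector with rᵀL = 0 and rᵀ1_N = N, put R = diag(r) and L̂ = RL + LᵀR. Let l, q ≥ 1 and for each i = 1,…,N let T_{i1} ∈ ℝ^{l×l}, T_{i2} ∈ ℝ^{q×q} be orthogonal, let 0 ≤ v_{i1} ≤ l, 0 ≤ v_{i2} ≤ q, g_i > 0, and set G_{i1} = diag(g_i I_{v_{i1}}, 0_{(l−v_{i1})×(l−v_{i1})}), G_{i2} = diag(g_i I_{v_{i2}}, 0_{(q−v_{i2})×(q−v_{i2})}), T_a = blockdiag(T_{1a},…,T_{Na}) and G_a = blockdiag(G_{1a},…,G_{Na}) for a = 1,2. Assume: (i) the only w₁ ∈ ℝ^l such that for every i the first v_{i1} entries of T_{i1}ᵀw₁ vanish is w₁ = 0, and (ii) the only w₂ ∈ ℝ^q such that for every i the first v_{i2} entries of T_{i2}ᵀw₂ vanish is w₂ = 0. Then there exists a single μ > 0 such that T₁ᵀ(L̂ ⊗ I_l)T₁ + G₁ ⪰ μ I_{Nl} and T₂ᵀ(L̂ ⊗ I_q)T₂ + G₂ ⪰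 μ I_{Nq}. -/

import Mathlib

open Matrix
open scoped Kronecker

/-- Directed-graph Laplacian `L = D − 𝒜` with `D` the diagonal matrix of row sums of the
adjacency matrix. -/
def lap {N : ℕ} (Adj : Matrix (Fin N) (Fin N) ℝ) : Matrix (Fin N) (Fin N) ℝ :=
  Matrix.diagonal (fun i => ∑ j, Adj i j) - Adj

/-- `Adj i j = 1` encodes an arc from node `j` to node `i`; strong connectivity asks for a
directed path between any two distinct nodes. -/
def StronglyConnected {N : ℕ} (Adj : Matrix (Fin N) (Fin N) ℝ) : Prop :=
  ∀ i j : Fin N, i ≠ j → Relation.TransGen (fun a b => Adj b a = 1) i j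

/-- Characteristic polynomial `det (s E − A)` of the matrix pencil `(E, A)`. -/
noncomputable def pencilPoly {m : Type*} [Fintype m] [DecidableEq m]
    (E A : Matrix m m ℝ) : Polynomial ℝ :=
  ((Polynomial.X : Polynomial ℝ) • E.map Polynomial.C - A.map Polynomial.C).det

/-- The pencil `(E, A)` is regular if `det (s E − A)` is not the zero polynomial. -/
def PencilRegular {m : Type*} [Fintype m] [DecidableEq m] (E A : Matrix m m ℝ) : Prop :=
  pencilPoly E A ≠ 0

/-- The pencil `(E, A)` is stable if every complex root of `det (s E − A)` has negative
real part. -/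
def PencilStable {m : Type*} [Fintype m] [DecidableEq m] (E A : Matrix m m ℝ) : Prop :=
  ∀ z : ℂ, Polynomial.aeval z (pencilPoly E A) = 0 → z.re < 0

/-- The pencil `(E, A)` is impulse-free if `deg det (s E − A) = rank E`. -/
def PencilImpulseFree {m : Type*} [Fintype m] [DecidableEq m] (E A : Matrix m m ℝ) : Prop :=
  (pencilPoly E A).natDegree = E.rank

/-- Admissible = regular, stable and impulse-free. -/
def PencilAdmissible {m : Type*} [Fintype m] [DecidableEq m] (E A : Matrix m m ℝ) : Prop :=
  PencilRegular E A ∧ PencilStable E A ∧ PencilImpulseFree E A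

/-- A real square matrix is Hurwitz if all its complex eigenvalues have negative real part. -/
def IsHurwitz {m : Type*} [Fintype m] [DecidableEq m] (A : Matrix m m ℝ) : Prop :=
  ∀ z : ℂ, Polynomial.aeval z A.charpoly = 0 → z.re < 0

/-- Block-diagonal assembly of `N` (possibly rectangular) blocks of a common shape. -/
def bdiagR {N : ℕ} {m m' : Type*} (M : Fin N → Matrix m m' ℝ) :
    Matrix (Fin N × m) (Fin N × m') ℝ :=
  fun x y => if x.1 = y.1 then M x.1 x.2 y.2 else 0

/-- Largest singular value of a real matrix (its ℓ²-operator norm). -/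
noncomputable def specNorm {m : Type*} [Fintype m] [DecidableEq m] (M : Matrix m m ℝ) : ℝ :=
  ‖(Matrix.toEuclideanCLM (𝕜 := ℝ) M : EuclideanSpace ℝ m →L[ℝ] EuclideanSpace ℝ m)‖

lemma exists_shift {m : Type*} [Fintype m] [DecidableEq m] {M : Matrix m m ℝ}
    (hM : M.PosDef) : ∃ μ : ℝ, 0 < μ ∧ (M - μ • 1).PosSemidef := by
  cases isEmpty_or_nonempty m with
  | inl h =>
    refine ⟨1, one_pos, ⟨?_, fun x => by simp [Finsupp.sum, Finset.eq_empty_of_isEmpty x.support]⟩⟩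
    ext i j; exact (IsEmpty.false i).elim
  | inr h =>
    have hH := hM.1
    set μ := Finset.univ.inf' Finset.univ_nonempty hH.eigenvalues with hμ
    have hμpos : 0 < μ := by
      rw [hμ, Finset.lt_inf'_iff]
      exact fun i _ => hM.eigenvalues_pos i
    refine ⟨μ, hμpos, ?_⟩
    have hspec := hH.spectral_theorem
    have hU : (hH.eigenvectorUnitary : Matrix m m ℝ) * star (hH.eigenvectorUnitary : Matrix m m ℝ) = 1 :=
      (Matrix.mem_unitaryGroup_iff).mp hH.eigenvectorUnitary.2
    have h1 : M - μ • 1 = (hH.eigenvectorUnitary : Matrix m m ℝ) *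
        Matrix.diagonal (fun i => hH.eigenvalues i - μ) *
        (star (hH.eigenvectorUnitary : Matrix m m ℝ)) := by
      have h2 : (μ • 1 : Matrix m m ℝ) = (hH.eigenvectorUnitary : Matrix m m ℝ) * (μ • 1) *
          (star (hH.eigenvectorUnitary : Matrix m m ℝ)) := by
        rw [Matrix.mul_smul, Matrix.mul_one, Matrix.smul_mul, hU]
      conv_lhs => rw [hspec, h2]
      rw [Unitary.conjStarAlgAut_apply]
      rw [← Matrix.sub_mul, ← Matrix.mul_sub]
      congr 2
      ext i j
      rcases eq_or_ne i j with rfl | hij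
      · simp [Matrix.diagonal_apply_eq, Matrix.one_apply_eq]
      · simp [Matrix.diagonal_apply_ne _ hij, Matrix.one_apply_ne hij]
    rw [h1]
    have hd : (Matrix.diagonal (fun i => hH.eigenvalues i - μ)).PosSemidef := by
      rw [Matrix.posSemidef_diagonal_iff]
      intro i
      simp only [sub_nonneg, hμ]
      exact Finset.inf'_le _ (Finset.mem_univ i)
    have := hd.mul_mul_conjTranspose_same (hH.eigenvectorUnitary : Matrix m m ℝ)
    simpa [Matrix.star_eq_conjTranspose] using this

lemma psd_shift_mono {m : Type*} [Fintype m] [DecidableEq m] {M : Matrix m m ℝ} {c μ : ℝ}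
    (h : (M - c • 1).PosSemidef) (hμc : μ ≤ c) : (M - μ • 1).PosSemidef := by
  have h2 : ((c - μ) • (1 : Matrix m m ℝ)).PosSemidef := by
    have : ((c - μ) • (1 : Matrix m m ℝ)) = Matrix.diagonal (fun _ => c - μ) := by
      ext i j
      rcases eq_or_ne i j with rfl | hij
      · simp
      · simp [Matrix.one_apply_ne hij, Matrix.diagonal_apply_ne _ hij]
    rw [this, Matrix.posSemidef_diagonal_iff]
    exact fun _ => sub_nonneg.mpr hμc
  have : M - μ • 1 = (M - c • 1) + (c - μ) • 1 := by
    rw [sub_smul]; abel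
  rw [this]
  exact h.add h2

lemma lap_quadform {N : ℕ} (Adj : Matrix (Fin N) (Fin N) ℝ)
    (r : Fin N → ℝ) (hrL : r ᵥ* lap Adj = 0) (x : Fin N → ℝ) :
    x ⬝ᵥ ((Matrix.diagonal r * lap Adj + (lap Adj)ᵀ * Matrix.diagonal r) *ᵥ x)
      = ∑ i, ∑ j, r i * Adj i j * (x i - x j) ^ 2 := by
  set d : Fin N → ℝ := fun i => ∑ k, Adj i k with hd
  have lap_apply : ∀ i j, lap Adj i j = (if i = j then d i else 0) - Adj i j := by
    intro i j
    simp [lap, Matrix.sub_apply, Matrix.diagonal_apply, hd]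
  have key : ∀ j, (∑ i, r i * Adj i j) = r j * d j := by
    intro j
    have h := congrFun hrL j
    simp only [vecMul, dotProduct, lap_apply, Pi.zero_apply, mul_sub,
      Finset.sum_sub_distrib, mul_ite, mul_zero] at h
    rw [Finset.sum_ite_eq' Finset.univ j (fun i => r i * d i)] at h
    simp only [Finset.mem_univ, if_true] at h
    linarith
  have expand : x ⬝ᵥ ((Matrix.diagonal r * lap Adj + (lap Adj)ᵀ * Matrix.diagonal r) *ᵥ x)
      = ∑ i, ∑ j, (r i * lap Adj i j * x i * x j + r j * lap Adj j i * x i * x j) := by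
    simp only [dotProduct, mulVec, Matrix.add_apply, Matrix.diagonal_mul, Matrix.mul_diagonal,
      Matrix.transpose_apply, Finset.mul_sum]
    apply Finset.sum_congr rfl; intro i _
    apply Finset.sum_congr rfl; intro j _
    ring
  rw [expand]
  have swap : ∑ i, ∑ j, r j * lap Adj j i * x i * x j
      = ∑ i, ∑ j, r i * lap Adj i j * x i * x j := by
    rw [Finset.sum_comm]
    apply Finset.sum_congr rfl; intro i _
    apply Finset.sum_congr rfl; intro j _
    ring
  have L1 : ∑ i, ∑ j, r i * lap Adj i j * x i * x j
      = (∑ i, r i * d i * x i * x i) - ∑ i, ∑ j, r i * Adj i j * x i * x j := by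
    simp only [lap_apply, mul_sub, sub_mul, mul_ite, ite_mul, mul_zero, zero_mul,
      Finset.sum_sub_distrib, Finset.sum_ite_eq, Finset.mem_univ, if_true]
  have T1a : ∀ i, ∑ j, r i * Adj i j * x i * x i = r i * d i * x i * x i := by
    intro i
    calc ∑ j, r i * Adj i j * x i * x i = ∑ j, Adj i j * (r i * x i * x i) := by
          apply Finset.sum_congr rfl; intro j _; ring
      _ = (∑ j, Adj i j) * (r i * x i * x i) := (Finset.sum_mul _ _ _).symm
      _ = r i * d i * x i * x i := by rw [hd]; ring
  have T3 : ∑ i, ∑ j, r i * Adj i j * x j * x j = ∑ i, r i * d i * x i * x i := by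
    rw [Finset.sum_comm]
    apply Finset.sum_congr rfl; intro j _
    calc ∑ i, r i * Adj i j * x j * x j = (∑ i, r i * Adj i j) * (x j * x j) := by
          rw [Finset.sum_mul]; apply Finset.sum_congr rfl; intro i _; ring
      _ = r j * d j * x j * x j := by rw [key]; ring
  have R1 : ∑ i, ∑ j, r i * Adj i j * (x i - x j) ^ 2
      = (∑ i, r i * d i * x i * x i) - 2 * (∑ i, ∑ j, r i * Adj i j * x i * x j)
        + (∑ i, r i * d i * x i * x i) := by
    have : ∀ i, ∑ j, r i * Adj i j * (x i - x j) ^ 2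
        = (∑ j, r i * Adj i j * x i * x i) - 2 * (∑ j, r i * Adj i j * x i * x j)
          + ∑ j, r i * Adj i j * x j * x j := by
      intro i
      rw [Finset.mul_sum, ← Finset.sum_sub_distrib, ← Finset.sum_add_distrib]
      apply Finset.sum_congr rfl; intro j _
      ring
    rw [Finset.sum_congr rfl (fun i _ => this i), Finset.sum_add_distrib,
      Finset.sum_sub_distrib, T3, ← Finset.mul_sum]
    congr 1
    congr 1
    exact Finset.sum_congr rfl (fun i _ => T1a i)
  have split : ∑ i, ∑ j, (r i * lap Adj i j * x i * x j + r j * lap Adj j i * x i * x j)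
      = (∑ i, ∑ j, r i * lap Adj i j * x i * x j)
        + ∑ i, ∑ j, r j * lap Adj j i * x i * x j := by
    rw [← Finset.sum_add_distrib]
    exact Finset.sum_congr rfl fun i _ => Finset.sum_add_distrib
  rw [split, swap, L1, R1]
  ring

lemma bdiagR_mulVec {N : ℕ} {m m' : Type*} [Fintype m'] [DecidableEq (Fin N)]
    (M : Fin N → Matrix m m' ℝ) (x : Fin N × m' → ℝ) (p : Fin N × m) :
    (bdiagR M *ᵥ x) p = (M p.1 *ᵥ fun b => x (p.1, b)) p.2 := by
  obtain ⟨i, a⟩ := p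
  simp only [mulVec, dotProduct, bdiagR, Fintype.sum_prod_type, ite_mul, zero_mul]
  have h1 : ∀ j, (∑ b, if i = j then M i a b * x (j, b) else 0)
      = if i = j then (∑ b, M i a b * x (j, b)) else 0 := by
    intro j; split <;> simp
  rw [Finset.sum_congr rfl fun j _ => h1 j,
    Finset.sum_ite_eq Finset.univ i (fun j => ∑ b, M i a b * x (j, b))]
  simp

lemma kron_quadform {N l : ℕ} (Lh : Matrix (Fin N) (Fin N) ℝ) (y : Fin N × Fin l → ℝ) :
    y ⬝ᵥ ((Lh ⊗ₖ (1 : Matrix (Fin l) (Fin l) ℝ)) *ᵥ y)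
      = ∑ a : Fin l, (fun i => y (i, a)) ⬝ᵥ (Lh *ᵥ fun i => y (i, a)) := by
  simp only [dotProduct, mulVec, kroneckerMap_apply, Fintype.sum_prod_type, Matrix.one_apply,
    mul_ite, mul_one, mul_zero, ite_mul, zero_mul]
  rw [Finset.sum_comm]
  apply Finset.sum_congr rfl; intro a _
  apply Finset.sum_congr rfl; intro i _
  conv_lhs => rw [Finset.mul_sum]
  conv_rhs => rw [Finset.mul_sum]
  apply Finset.sum_congr rfl; intro j _
  congr 1
  rw [Finset.sum_ite_eq Finset.univ a (fun b => Lh i j * y (j, b))]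
  simp

lemma Gquad {N : ℕ} {m : Type*} [Fintype m] [DecidableEq m] [DecidableEq (Fin N)]
    (c : Fin N → m → ℝ) (x : Fin N × m → ℝ) :
    x ⬝ᵥ (bdiagR (fun i => Matrix.diagonal (c i)) *ᵥ x)
      = ∑ i, ∑ a, c i a * x (i, a) ^ 2 := by
  simp only [dotProduct, Fintype.sum_prod_type]
  apply Finset.sum_congr rfl; intro i _
  apply Finset.sum_congr rfl; intro a _
  rw [bdiagR_mulVec]
  simp [mulVec, dotProduct, Matrix.diagonal_apply, ite_mul, zero_mul,
    Finset.sum_ite_eq Finset.univ a (fun b => c i a * x (i, b))]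
  ring

lemma auxPD {N l : ℕ} (Lh : Matrix (Fin N) (Fin N) ℝ)
    (hsym : Lhᵀ = Lh)
    (hpsd : ∀ x : Fin N → ℝ, 0 ≤ x ⬝ᵥ (Lh *ᵥ x))
    (hker : ∀ x : Fin N → ℝ, x ⬝ᵥ (Lh *ᵥ x) = 0 → ∀ i j, x i = x j)
    (T : Fin N → Matrix (Fin l) (Fin l) ℝ) (hT : ∀ i, (T i)ᵀ * T i = 1)
    (v : Fin N → ℕ) (g : Fin N → ℝ) (hg : ∀ i, 0 < g i)
    (hobs : ∀ w : Fin l → ℝ,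
      (∀ i, ∀ a : Fin l, (a : ℕ) < v i → ((T i)ᵀ *ᵥ w) a = 0) → w = 0) :
    ((bdiagR T)ᵀ * (Lh ⊗ₖ (1 : Matrix (Fin l) (Fin l) ℝ)) * bdiagR T
      + bdiagR (fun i => Matrix.diagonal fun a : Fin l => if (a : ℕ) < v i then g i else 0)).PosDef := by
  set K := Lh ⊗ₖ (1 : Matrix (Fin l) (Fin l) ℝ) with hK
  set Tb := bdiagR T with hTbd
  set G := bdiagR (fun i => Matrix.diagonal fun a : Fin l => if (a : ℕ) < v i then g i else 0)
    with hGd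
  have hKsym : Kᵀ = K := by
    rw [hK, ← Matrix.kroneckerMap_transpose, hsym, Matrix.transpose_one]
  have hGsym : Gᵀ = G := by
    ext ⟨i, a⟩ ⟨j, b⟩
    rcases eq_or_ne i j with rfl | hij
    · simp [hGd, bdiagR, Matrix.transpose_apply, Matrix.diagonal_apply]
      rcases eq_or_ne a b with rfl | hab
      · simp
      · simp [hab, Ne.symm hab]
    · simp [hGd, bdiagR, Matrix.transpose_apply, hij, Ne.symm hij]
  rw [Matrix.posDef_iff_dotProduct_mulVec]
  constructor
  · show (Tbᵀ * K * Tb + G)ᴴ = _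
    have : (Tbᵀ * K * Tb + G)ᴴ = (Tbᵀ * K * Tb + G)ᵀ := by
      ext p q; simp [Matrix.conjTranspose_apply]
    rw [this, Matrix.transpose_add, Matrix.transpose_mul, Matrix.transpose_mul,
      Matrix.transpose_transpose, hKsym, hGsym, Matrix.mul_assoc]
  · intro x hx
    set y := Tb *ᵥ x with hy
    have hsplit : (star x) ⬝ᵥ ((Tbᵀ * K * Tb + G) *ᵥ x)
        = y ⬝ᵥ (K *ᵥ y) + x ⬝ᵥ (G *ᵥ x) := by
      rw [show (star x) = x from rfl]
      rw [Matrix.add_mulVec, dotProduct_add, Matrix.mul_assoc, ← Matrix.mulVec_mulVec,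
        Matrix.dotProduct_mulVec x Tbᵀ, Matrix.vecMul_transpose, hy, Matrix.mulVec_mulVec]
    have hKq : y ⬝ᵥ (K *ᵥ y) = ∑ a : Fin l, (fun i => y (i, a)) ⬝ᵥ (Lh *ᵥ fun i => y (i, a)) :=
      kron_quadform Lh y
    have hGq : x ⬝ᵥ (G *ᵥ x)
        = ∑ i, ∑ a : Fin l, (if (a : ℕ) < v i then g i else 0) * x (i, a) ^ 2 := Gquad _ x
    have hK0 : 0 ≤ y ⬝ᵥ (K *ᵥ y) := by
      rw [hKq]; exact Finset.sum_nonneg fun a _ => hpsd _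
    have htermnn : ∀ (i : Fin N) (a : Fin l), 0 ≤ (if (a : ℕ) < v i then g i else 0) * x (i, a) ^ 2 := by
      intro i a
      refine mul_nonneg ?_ (sq_nonneg _)
      split
      · exact (hg i).le
      · exact le_refl 0
    have hG0 : 0 ≤ x ⬝ᵥ (G *ᵥ x) := by
      rw [hGq]
      exact Finset.sum_nonneg fun i _ => Finset.sum_nonneg fun a _ => htermnn i a
    rw [hsplit]
    rcases (add_nonneg hK0 hG0).lt_or_eq with h | h
    · exact h
    · exfalso
      have hKz : y ⬝ᵥ (K *ᵥ y) = 0 := by linarith [hK0, hG0]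
      have hGz : x ⬝ᵥ (G *ᵥ x) = 0 := by linarith [hK0, hG0]
      have hcols : ∀ a : Fin l, ∀ i j, y (i, a) = y (j, a) := by
        intro a
        refine hker _ ?_
        have hz : ∑ a : Fin l, (fun i => y (i, a)) ⬝ᵥ (Lh *ᵥ fun i => y (i, a)) = 0 := by
          rw [← hKq]; exact hKz
        exact (Finset.sum_eq_zero_iff_of_nonneg (fun a _ => hpsd _)).mp hz a (Finset.mem_univ a)
      obtain ⟨p0, hp0⟩ := Function.ne_iff.mp hx
      set w : Fin l → ℝ := fun a => y (p0.1, a) with hwdef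
      have hw : ∀ i, (T i *ᵥ fun b => x (i, b)) = w := by
        intro i; funext a
        rw [← bdiagR_mulVec T x (i, a)]
        exact hcols a i p0.1
      have hxi : ∀ i, (fun b => x (i, b)) = (T i)ᵀ *ᵥ w := by
        intro i
        have h2 := congrArg (fun z => (T i)ᵀ *ᵥ z) (hw i)
        simp only [Matrix.mulVec_mulVec, hT i, Matrix.one_mulVec] at h2
        exact h2
      have hxz : ∀ (i : Fin N) (a : Fin l), (a : ℕ) < v i → x (i, a) = 0 := by
        intro i a hav
        have h2 : ∑ a : Fin l, (if (a : ℕ) < v i then g i else 0) * x (i, a) ^ 2 = 0 := by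
          have hz : ∑ i, ∑ a : Fin l, (if (a : ℕ) < v i then g i else 0) * x (i, a) ^ 2 = 0 := by
            rw [← hGq]; exact hGz
          exact (Finset.sum_eq_zero_iff_of_nonneg
            (fun i _ => Finset.sum_nonneg fun a _ => htermnn i a)).mp hz i (Finset.mem_univ i)
        have h3 : (if (a : ℕ) < v i then g i else 0) * x (i, a) ^ 2 = 0 :=
          (Finset.sum_eq_zero_iff_of_nonneg (fun a _ => htermnn i a)).mp h2 a (Finset.mem_univ a)
        rw [if_pos hav] at h3
        rcases mul_eq_zero.mp h3 with h4 | h4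
        · exact absurd h4 (hg i).ne'
        · exact pow_eq_zero_iff (by norm_num) |>.mp h4
      have hwz : w = 0 := by
        refine hobs w fun i a hav => ?_
        rw [← congrFun (hxi i) a]
        exact hxz i a hav
      apply hp0
      have := congrFun (hxi p0.1) p0.2
      rw [hwz, Matrix.mulVec_zero] at this
      simpa using this

/-- Two-block joint-observability Lemma (Lemma 5 of the paper): a single
`μ > 0` works simultaneously for the slow (`l`-dimensional) and fast (`q`-dimensional)
coordinates. -/
theorem stmt_3 {N l q : ℕ} (hl : 1 ≤ l) (hq : 1 ≤ q)
    (Adj : Matrix (Fin N) (Fin N) ℝ)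
    (hAdj : ∀ i j, Adj i j = 0 ∨ Adj i j = 1)
    (hconn : StronglyConnected Adj)
    (r : Fin N → ℝ) (hr : ∀ i, 0 < r i) (hrL : r ᵥ* lap Adj = 0)
    (hrsum : (∑ i, r i) = (N : ℝ))
    (Lh : Matrix (Fin N) (Fin N) ℝ)
    (hLh : Lh = Matrix.diagonal r * lap Adj + (lap Adj)ᵀ * Matrix.diagonal r)
    (T1 : Fin N → Matrix (Fin l) (Fin l) ℝ) (hT1 : ∀ i, (T1 i)ᵀ * T1 i = 1)
    (T2 : Fin N → Matrix (Fin q) (Fin q) ℝ) (hT2 : ∀ i, (T2 i)ᵀ * T2 i = 1)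
    (v1 v2 : Fin N → ℕ) (hv1 : ∀ i, v1 i ≤ l) (hv2 : ∀ i, v2 i ≤ q)
    (g : Fin N → ℝ) (hg : ∀ i, 0 < g i)
    (hobs1 : ∀ w1 : Fin l → ℝ,
      (∀ i, ∀ a : Fin l, (a : ℕ) < v1 i → ((T1 i)ᵀ *ᵥ w1) a = 0) → w1 = 0)
    (hobs2 : ∀ w2 : Fin q → ℝ,
      (∀ i, ∀ b : Fin q, (b : ℕ) < v2 i → ((T2 i)ᵀ *ᵥ w2) b = 0) → w2 = 0)
    (Tb1 G1 : Matrix (Fin N × Fin l) (Fin N × Fin l) ℝ)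
    (Tb2 G2 : Matrix (Fin N × Fin q) (Fin N × Fin q) ℝ)
    (hTb1 : Tb1 = bdiagR T1) (hTb2 : Tb2 = bdiagR T2)
    (hG1 : G1 = bdiagR (fun i =>
        Matrix.diagonal fun a : Fin l => if (a : ℕ) < v1 i then g i else 0))
    (hG2 : G2 = bdiagR (fun i =>
        Matrix.diagonal fun b : Fin q => if (b : ℕ) < v2 i then g i else 0)) :
    ∃ μ : ℝ, 0 < μ ∧
      (Tb1ᵀ * (Lh ⊗ₖ (1 : Matrix (Fin l) (Fin l) ℝ)) * Tb1 + G1 - μ • 1).PosSemidef ∧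
      (Tb2ᵀ * (Lh ⊗ₖ (1 : Matrix (Fin q) (Fin q) ℝ)) * Tb2 + G2 - μ • 1).PosSemidef := by
  -- properties of Lh
  have hsym : Lhᵀ = Lh := by
    rw [hLh, Matrix.transpose_add, Matrix.transpose_mul, Matrix.transpose_mul,
      Matrix.diagonal_transpose, Matrix.transpose_transpose, add_comm]
  have hquad : ∀ x : Fin N → ℝ,
      x ⬝ᵥ (Lh *ᵥ x) = ∑ i, ∑ j, r i * Adj i j * (x i - x j) ^ 2 := by
    intro x; rw [hLh]; exact lap_quadform Adj r hrL x
  have hAnn : ∀ i j, 0 ≤ Adj i j := by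
    intro i j; rcases hAdj i j with h | h <;> rw [h] <;> norm_num
  have htermnn : ∀ x : Fin N → ℝ, ∀ i j : Fin N, 0 ≤ r i * Adj i j * (x i - x j) ^ 2 := by
    intro x i j
    exact mul_nonneg (mul_nonneg (hr i).le (hAnn i j)) (sq_nonneg _)
  have hpsd : ∀ x : Fin N → ℝ, 0 ≤ x ⬝ᵥ (Lh *ᵥ x) := by
    intro x
    rw [hquad]
    exact Finset.sum_nonneg fun i _ => Finset.sum_nonneg fun j _ => htermnn x i j
  have hker : ∀ x : Fin N → ℝ, x ⬝ᵥ (Lh *ᵥ x) = 0 → ∀ i j, x i = x j := by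
    intro x hx
    have hz : ∑ i, ∑ j, r i * Adj i j * (x i - x j) ^ 2 = 0 := by rw [← hquad]; exact hx
    have hall : ∀ i j : Fin N, r i * Adj i j * (x i - x j) ^ 2 = 0 := by
      intro i j
      have h1 : ∑ j, r i * Adj i j * (x i - x j) ^ 2 = 0 :=
        (Finset.sum_eq_zero_iff_of_nonneg
          (fun i _ => Finset.sum_nonneg fun j _ => htermnn x i j)).mp hz i (Finset.mem_univ i)
      exact (Finset.sum_eq_zero_iff_of_nonneg (fun j _ => htermnn x i j)).mp h1 j
        (Finset.mem_univ j)
    have step : ∀ a b : Fin N, Adj b a = 1 → x b = x a := by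
      intro a b hab
      have h1 := hall b a
      rw [hab, mul_one] at h1
      rcases mul_eq_zero.mp h1 with h2 | h2
      · exact absurd h2 (hr b).ne'
      · have := pow_eq_zero_iff (n := 2) (by norm_num) |>.mp h2
        linarith [sub_eq_zero.mp this]
    have tg : ∀ i j : Fin N, Relation.TransGen (fun a b => Adj b a = 1) i j → x j = x i := by
      intro i j h
      induction h with
      | single h => exact step _ _ h
      | tail _ hR ih => exact (step _ _ hR).trans ih
    intro i j
    rcases eq_or_ne i j with rfl | hij
    · rfl
    · exact (tg i j (hconn i j hij)).symm
  -- positive definiteness of both blocks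
  have hPD1 := auxPD Lh hsym hpsd hker T1 hT1 v1 g hg hobs1
  have hPD2 := auxPD Lh hsym hpsd hker T2 hT2 v2 g hg hobs2
  rw [← hTb1, ← hG1] at hPD1
  rw [← hTb2, ← hG2] at hPD2
  obtain ⟨μ₁, hμ₁, hS1⟩ := exists_shift hPD1
  obtain ⟨μ₂, hμ₂, hS2⟩ := exists_shift hPD2
  refine ⟨min μ₁ μ₂, lt_min hμ₁ hμ₂, ?_, ?_⟩
  · exact psd_shift_mono hS1 (min_le_left _ _)
  · exact psd_shift_mono hS2 (min_le_right _ _)
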